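/- Suppose Φ = φ⟦ψ1,…,ψk⟧ is an organized formula. Then every formula in [Φ]_{𝒯∖{N}} has the form φ′⟦ψ′1,…,ψ′k⟧, where φ′ ∈ [φ]_{𝒯∖{N}} and ψ′i ∈ [ψi]_{𝒯∖{N}} for each i = 1,…,k; here the rules of 𝒯∖{N} are applied to the holey formula φ under the association i ↦ free(ψi) defined on each hole i = 1,…,k. -/

import Mathlib

namespace WidthPaper

/-- Positive (relational) first-order formulas: atoms `R(v₁,…,vₖ)` (relation symbol
coded by a natural number, arguments a list of variables), binary `∧`, binary `∨`,
and quantifications `∃x`, `∀x`. -/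
inductive PFO : Type where
  | atom : ℕ → List ℕ → PFO
  | conj : PFO → PFO → PFO
  | disj : PFO → PFO → PFO
  | ex   : ℕ → PFO → PFO
  | all  : ℕ → PFO → PFO
  deriving DecidableEq

namespace PFO

/-- Free variables of a pfo-formula. -/
def free : PFO → Finset ℕ
  | .atom _ vs => vs.toFinset
  | .conj f g => free f ∪ free g
  | .disj f g => free f ∪ free g
  | .ex x f => free f \ {x}
  | .all x f => free f \ {x}

/-- Replace every free occurrence of `x` by `y`. -/
def rename (x y : ℕ) : PFO → PFO
  | .atom r vs => .atom r (vs.map fun v => if v = x then y else v)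
  | .conj f g => .conj (rename x y f) (rename x y g)
  | .disj f g => .disj (rename x y f) (rename x y g)
  | .ex z f => if z = x then .ex z f else .ex z (rename x y f)
  | .all z f => if z = x then .all z f else .all z (rename x y f)

/-- Associativity rule (at the root). -/
inductive RA : PFO → PFO → Prop
  | conj1 (f g h : PFO) : RA (.conj f (.conj g h)) (.conj (.conj f g) h)
  | conj2 (f g h : PFO) : RA (.conj (.conj f g) h) (.conj f (.conj g h))
  | disj1 (f g h : PFO) : RA (.disj f (.disj g h)) (.disj (.disj f g) h)
  | disj2 (f g h : PFO) : RA (.disj (.disj f g) h) (.disj f (.disj g h))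

/-- Commutativity rule (at the root). -/
inductive RC : PFO → PFO → Prop
  | conj (f g : PFO) : RC (.conj f g) (.conj g f)
  | disj (f g : PFO) : RC (.disj f g) (.disj g f)

/-- Reordering rule (at the root): `QxQyF → QyQxF`. -/
inductive RO : PFO → PFO → Prop
  | ex (x y : ℕ) (f : PFO) : RO (.ex x (.ex y f)) (.ex y (.ex x f))
  | all (x y : ℕ) (f : PFO) : RO (.all x (.all y f)) (.all y (.all x f))

/-- Pushdown rule (at the root). -/
inductive RPd : PFO → PFO → Prop
  | ex (x : ℕ) (f g : PFO) : x ∉ free g → RPd (.ex x (.conj f g)) (.conj (.ex x f) g)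
  | all (x : ℕ) (f g : PFO) : x ∉ free g → RPd (.all x (.disj f g)) (.disj (.all x f) g)

/-- Pushup rule: the inverse of pushdown. -/
def RPu : PFO → PFO → Prop := fun f g => RPd g f

/-- Renaming rule (at the root). -/
inductive RN : PFO → PFO → Prop
  | ex (x y : ℕ) (f : PFO) : y ∉ free f → RN (.ex x f) (.ex y (rename x y f))
  | all (x y : ℕ) (f : PFO) : y ∉ free f → RN (.all x f) (.all y (rename x y f))

/-- Splitdown rule (at the root). -/
inductive RSd : PFO → PFO → Prop
  | ex (x : ℕ) (f g : PFO) : RSd (.ex x (.disj f g)) (.disj (.ex x f) (.ex x g))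
  | all (x : ℕ) (f g : PFO) : RSd (.all x (.conj f g)) (.conj (.all x f) (.all x g))

/-- Splitup rule: the inverse of splitdown. -/
def RSu : PFO → PFO → Prop := fun f g => RSd g f

/-- Removal rule (at the root). -/
inductive RM : PFO → PFO → Prop
  | ex (x : ℕ) (f : PFO) : x ∉ free f → RM (.ex x f) f
  | all (x : ℕ) (f : PFO) : x ∉ free f → RM (.all x f) f

/-- Closure of a root rewriting relation under application at any subformula position. -/
inductive Step (r : PFO → PFO → Prop) : PFO → PFO → Prop
  | root {f g} : r f g → Step r f g
  | conjL {f f' g} : Step r f f' → Step r (.conj f g) (.conj f' g)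
  | conjR {f g g'} : Step r g g' → Step r (.conj f g) (.conj f g')
  | disjL {f f' g} : Step r f f' → Step r (.disj f g) (.disj f' g)
  | disjR {f g g'} : Step r g g' → Step r (.disj f g) (.disj f g')
  | exC {x f f'} : Step r f f' → Step r (.ex x f) (.ex x f')
  | allC {x f f'} : Step r f f' → Step r (.all x f) (.all x f')

/-- Union of the root rules in ACO = {A, C, O}. -/
def rACO : PFO → PFO → Prop := fun f g => RA f g ∨ RC f g ∨ RO f g

/-- Union of the root rules in 𝒯 = {A, C, O, P↓, P↑, N}. -/
def rT : PFO → PFO → Prop := fun f g => rACO f g ∨ RPd f g ∨ RPu f g ∨ RN f g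

/-- Union of the root rules in 𝒯 ∖ {N} = {A, C, O, P↓, P↑}. -/
def rTnoN : PFO → PFO → Prop := fun f g => rACO f g ∨ RPd f g ∨ RPu f g

/-- Union of the root rules {P↓, S↓, M} (the reduction of the system Y). -/
def rY : PFO → PFO → Prop := fun f g => RPd f g ∨ RSd f g ∨ RM f g

/-- Union of the root rules {S↓, M} (the reduction of the system Y′). -/
def rYp : PFO → PFO → Prop := fun f g => RSd f g ∨ RM f g

/-- Union of all the root rules 𝒜 = 𝒯 ∪ {S↓, S↑, M}. -/
def rAll : PFO → PFO → Prop := fun f g => rT f g ∨ RSd f g ∨ RSu f g ∨ RM f g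

/-- The ↔*_R-equivalence class `[φ]_R` of `φ`, for the root-rule union `r`. -/
def eqvCls (r : PFO → PFO → Prop) (φ : PFO) : Set PFO :=
  {ψ | Relation.EqvGen (Step r) φ ψ}

/-- A rule (given by its root relation) is applicable to a formula if it can be applied
at some subformula position. -/
def Applicable (r : PFO → PFO → Prop) (φ : PFO) : Prop := ∃ ψ, Step r φ ψ

/-- A rule is applicable to a set of formulas if it is applicable to some member. -/
def ApplicableSet (r : PFO → PFO → Prop) (S : Set PFO) : Prop := ∃ φ ∈ S, Applicable r φ

/-- Number of nodes of the syntax tree. -/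
def size : PFO → ℕ
  | .atom _ _ => 1
  | .conj f g => size f + size g + 1
  | .disj f g => size f + size g + 1
  | .ex _ f => size f + 1
  | .all _ f => size f + 1

/-- List of all subformula occurrences. -/
def subformulas : PFO → List PFO
  | .atom r vs => [.atom r vs]
  | .conj f g => .conj f g :: (subformulas f ++ subformulas g)
  | .disj f g => .disj f g :: (subformulas f ++ subformulas g)
  | .ex x f => .ex x f :: subformulas f
  | .all x f => .all x f :: subformulas f

/-- The width of a formula: the maximum number of free variables over all subformulas. -/
def width (φ : PFO) : ℕ := ((subformulas φ).map fun ψ => (free ψ).card).foldr max 0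

/-- The width of a set of formulas: the minimum width over its members. -/
noncomputable def setWidth (S : Set PFO) : ℕ := sInf (width '' S)

/-- The setoid of ↔*_ACO-equivalence. -/
def acoSetoid : Setoid PFO := ⟨Relation.EqvGen (Step rACO), Relation.EqvGen.is_equivalence _⟩

/-- The setoid of ↔*_𝒯-equivalence. -/
def tSetoid : Setoid PFO := ⟨Relation.EqvGen (Step rT), Relation.EqvGen.is_equivalence _⟩

/-- The reduction of a quotient system `(PFO, Step r) / s`:  `C → C′` iff there are
`d ∈ C` and `d′ ∈ C′` with `Step r d d′`. -/
def qStep (s : Setoid PFO) (r : PFO → PFO → Prop) (C C' : Quotient s) : Prop :=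
  ∃ d d', C = Quotient.mk s d ∧ C' = Quotient.mk s d' ∧ Step r d d'

/-- The multiset of quantified-variable occurrences of a formula. -/
def quantVars : PFO → Multiset ℕ
  | .atom _ _ => 0
  | .conj f g => quantVars f + quantVars g
  | .disj f g => quantVars f + quantVars g
  | .ex x f => x ::ₘ quantVars f
  | .all x f => x ::ₘ quantVars f

/-- A formula is standardized if no variable is quantified at two different occurrences
and no quantified variable is free in the whole formula. -/
def Standardized (φ : PFO) : Prop :=
  (quantVars φ).Nodup ∧ ∀ x ∈ quantVars φ, x ∉ free φ

/-- A formula is pushed-down if the pushdown rule is not applicable to it. -/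
def PushedDown (φ : PFO) : Prop := ¬ Applicable RPd φ

/-- A set of formulas is pushed-down if each member is pushed-down. -/
def PushedDownSet (S : Set PFO) : Prop := ∀ φ ∈ S, PushedDown φ

/-- The multiset of conjuncts of a formula (collapsing the top `∧`-structure). -/
def conjuncts : PFO → Multiset PFO
  | .conj f g => conjuncts f + conjuncts g
  | .atom r vs => {PFO.atom r vs}
  | .disj f g => {PFO.disj f g}
  | .ex x f => {PFO.ex x f}
  | .all x f => {PFO.all x f}

/-- The multiset of disjuncts of a formula (collapsing the top `∨`-structure). -/
def disjuncts : PFO → Multiset PFO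
  | .disj f g => disjuncts f + disjuncts g
  | .atom r vs => {PFO.atom r vs}
  | .conj f g => {PFO.conj f g}
  | .ex x f => {PFO.ex x f}
  | .all x f => {PFO.all x f}

/-- Number of atoms of a formula. -/
def atomCount : PFO → ℕ
  | .atom _ _ => 1
  | .conj f g => atomCount f + atomCount g
  | .disj f g => atomCount f + atomCount g
  | .ex _ f => atomCount f
  | .all _ f => atomCount f

/-- `φ` is an atom. -/
def isAtom : PFO → Prop
  | .atom _ _ => True
  | _ => False

/-- The top operation of `φ` is `∃` or `∧`. -/
def topEA : PFO → Prop
  | .conj _ _ => True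
  | .ex _ _ => True
  | _ => False

/-- The top operation of `φ` is `∀` or `∨`. -/
def topAO : PFO → Prop
  | .disj _ _ => True
  | .all _ _ => True
  | _ => False

/-- `φ` is an {∃,∧}-formula (built from atoms using only `∧` and `∃`). -/
def isEAFormula : PFO → Prop
  | .atom _ _ => True
  | .conj f g => isEAFormula f ∧ isEAFormula g
  | .ex _ f => isEAFormula f
  | _ => False

end PFO

open PFO

/-- Holey pfo-formulas: leaves are natural-number holes. -/
inductive Holey : Type where
  | hole : ℕ → Holey
  | conj : Holey → Holey → Holey
  | disj : Holey → Holey → Holey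
  | ex   : ℕ → Holey → Holey
  | all  : ℕ → Holey → Holey
  deriving DecidableEq

namespace Holey

/-- The multiset of hole occurrences. -/
def holes : Holey → Multiset ℕ
  | .hole i => {i}
  | .conj f g => holes f + holes g
  | .disj f g => holes f + holes g
  | .ex _ f => holes f
  | .all _ f => holes f

/-- A holey {∃,∧}-formula: uses only holes, `∧` and `∃`. -/
def isEA : Holey → Prop
  | .hole _ => True
  | .conj f g => isEA f ∧ isEA g
  | .ex _ f => isEA f
  | _ => False

/-- A holey {∀,∨}-formula: uses only holes, `∨` and `∀`. -/
def isAO : Holey → Prop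
  | .hole _ => True
  | .disj f g => isAO f ∧ isAO g
  | .all _ f => isAO f
  | _ => False

/-- The holey formula is atomic (a single hole). -/
def isHole : Holey → Prop
  | .hole _ => True
  | _ => False

/-- Free variables of a holey formula under an association `a` for the holes. -/
def hfree (a : ℕ → Finset ℕ) : Holey → Finset ℕ
  | .hole i => a i
  | .conj f g => hfree a f ∪ hfree a g
  | .disj f g => hfree a f ∪ hfree a g
  | .ex x f => hfree a f \ {x}
  | .all x f => hfree a f \ {x}

/-- Associativity rule on holey formulas (at the root). -/
inductive HRA : Holey → Holey → Prop
  | conj1 (f g h : Holey) : HRA (.conj f (.conj g h)) (.conj (.conj f g) h)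
  | conj2 (f g h : Holey) : HRA (.conj (.conj f g) h) (.conj f (.conj g h))
  | disj1 (f g h : Holey) : HRA (.disj f (.disj g h)) (.disj (.disj f g) h)
  | disj2 (f g h : Holey) : HRA (.disj (.disj f g) h) (.disj f (.disj g h))

/-- Commutativity rule on holey formulas (at the root). -/
inductive HRC : Holey → Holey → Prop
  | conj (f g : Holey) : HRC (.conj f g) (.conj g f)
  | disj (f g : Holey) : HRC (.disj f g) (.disj g f)

/-- Reordering rule on holey formulas (at the root). -/
inductive HRO : Holey → Holey → Prop
  | ex (x y : ℕ) (f : Holey) : HRO (.ex x (.ex y f)) (.ex y (.ex x f))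
  | all (x y : ℕ) (f : Holey) : HRO (.all x (.all y f)) (.all y (.all x f))

/-- Pushdown rule on holey formulas under an association (at the root). -/
inductive HRPd (a : ℕ → Finset ℕ) : Holey → Holey → Prop
  | ex (x : ℕ) (f g : Holey) : x ∉ hfree a g →
      HRPd a (.ex x (.conj f g)) (.conj (.ex x f) g)
  | all (x : ℕ) (f g : Holey) : x ∉ hfree a g →
      HRPd a (.all x (.disj f g)) (.disj (.all x f) g)

/-- Union of the root rules 𝒯 ∖ {N} on holey formulas, under association `a`. -/
def hrTnoN (a : ℕ → Finset ℕ) : Holey → Holey → Prop :=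
  fun f g => HRA f g ∨ HRC f g ∨ HRO f g ∨ HRPd a f g ∨ HRPd a g f

/-- Closure of a root rewriting relation on holey formulas under application at
any subformula position. -/
inductive HStep (r : Holey → Holey → Prop) : Holey → Holey → Prop
  | root {f g} : r f g → HStep r f g
  | conjL {f f' g} : HStep r f f' → HStep r (.conj f g) (.conj f' g)
  | conjR {f g g'} : HStep r g g' → HStep r (.conj f g) (.conj f g')
  | disjL {f f' g} : HStep r f f' → HStep r (.disj f g) (.disj f' g)
  | disjR {f g g'} : HStep r g g' → HStep r (.disj f g) (.disj f g')
  | exC {x f f'} : HStep r f f' → HStep r (.ex x f) (.ex x f')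
  | allC {x f f'} : HStep r f f' → HStep r (.all x f) (.all x f')

/-- The equivalence class of a holey formula under ↔* of the rules 𝒯∖{N}
(under association `a`). -/
def hcls (a : ℕ → Finset ℕ) (φ : Holey) : Set Holey :=
  {ψ | Relation.EqvGen (HStep (hrTnoN a)) φ ψ}

/-- List of all holey subformula occurrences. -/
def hsubformulas : Holey → List Holey
  | .hole i => [.hole i]
  | .conj f g => .conj f g :: (hsubformulas f ++ hsubformulas g)
  | .disj f g => .disj f g :: (hsubformulas f ++ hsubformulas g)
  | .ex x f => .ex x f :: hsubformulas f
  | .all x f => .all x f :: hsubformulas f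

/-- Width of a holey formula under an association. -/
def hwidth (a : ℕ → Finset ℕ) (φ : Holey) : ℕ :=
  ((hsubformulas φ).map fun ψ => (hfree a ψ).card).foldr max 0

/-- Minimum width over a set of holey formulas. -/
noncomputable def setHWidth (a : ℕ → Finset ℕ) (S : Set Holey) : ℕ :=
  sInf ((hwidth a) '' S)

/-- The multiset of quantified-variable occurrences of a holey formula. -/
def hQuantVars : Holey → Multiset ℕ
  | .hole _ => 0
  | .conj f g => hQuantVars f + hQuantVars g
  | .disj f g => hQuantVars f + hQuantVars g
  | .ex x f => x ::ₘ hQuantVars f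
  | .all x f => x ::ₘ hQuantVars f

/-- A holey formula (with association `a`) is standardized. -/
def HStandardized (a : ℕ → Finset ℕ) (φ : Holey) : Prop :=
  (hQuantVars φ).Nodup ∧ ∀ x ∈ hQuantVars φ, x ∉ hfree a φ

/-- Subformula relation on holey formulas. -/
inductive HSub : Holey → Holey → Prop
  | refl (φ : Holey) : HSub φ φ
  | conjL {ψ f g} : HSub ψ f → HSub ψ (.conj f g)
  | conjR {ψ f g} : HSub ψ g → HSub ψ (.conj f g)
  | disjL {ψ f g} : HSub ψ f → HSub ψ (.disj f g)
  | disjR {ψ f g} : HSub ψ g → HSub ψ (.disj f g)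
  | exS {ψ x f} : HSub ψ f → HSub ψ (.ex x f)
  | allS {ψ x f} : HSub ψ f → HSub ψ (.all x f)

/-- The multiset of conjuncts of a holey formula. -/
def hconjuncts : Holey → Multiset Holey
  | .conj f g => hconjuncts f + hconjuncts g
  | .hole i => {Holey.hole i}
  | .disj f g => {Holey.disj f g}
  | .ex x f => {Holey.ex x f}
  | .all x f => {Holey.all x f}

end Holey

open Holey

/-- Substituting formulas for the holes of a holey formula:  `φ⟦ψ⟧`. -/
def substH (ψ : ℕ → PFO) : Holey → PFO
  | .hole i => ψ i
  | .conj f g => .conj (substH ψ f) (substH ψ g)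
  | .disj f g => .disj (substH ψ f) (substH ψ g)
  | .ex x f => .ex x (substH ψ f)
  | .all x f => .all x (substH ψ f)

mutual
/-- {∃,∧}-organized formulas. -/
inductive OrganizedEA : PFO → Prop
  | mk (h : Holey) (ψ : ℕ → PFO) :
      Holey.isEA h → ¬ Holey.isHole h → (Holey.holes h).Nodup →
      (∀ i ∈ Holey.holes h, ¬ PFO.isAtom (ψ i) → OrganizedAO (ψ i)) →
      OrganizedEA (substH ψ h)
/-- {∀,∨}-organized formulas. -/
inductive OrganizedAO : PFO → Prop
  | mk (h : Holey) (ψ : ℕ → PFO) :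
      Holey.isAO h → ¬ Holey.isHole h → (Holey.holes h).Nodup →
      (∀ i ∈ Holey.holes h, ¬ PFO.isAtom (ψ i) → OrganizedEA (ψ i)) →
      OrganizedAO (substH ψ h)
end

/-- Names for the rewriting rules. -/
inductive RuleName : Type where
  | A | C | O | Pd | Pu | N | Sd | Su | M
  deriving DecidableEq

/-- The one-step rewriting relation of a named rule (applied at any subformula position). -/
def ruleRel : RuleName → PFO → PFO → Prop
  | .A => Step RA
  | .C => Step RC
  | .O => Step RO
  | .Pd => Step RPd
  | .Pu => Step RPu
  | .N => Step RN
  | .Sd => Step RSd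
  | .Su => Step RSu
  | .M => Step RM

/-- `Chain φ L θ`: a rewriting sequence from `φ` to `θ` applying the rules named in `L`
in order. -/
inductive Chain : PFO → List RuleName → PFO → Prop
  | nil (φ : PFO) : Chain φ [] φ
  | cons {φ ψ θ : PFO} {r : RuleName} {rs : List RuleName} :
      ruleRel r φ ψ → Chain ψ rs θ → Chain φ (r :: rs) θ

/-- A tree decomposition of the hypergraph with vertex set `V` and edge set `E`. -/
structure TreeDecomp (V : Finset ℕ) (E : Finset (Finset ℕ)) : Type 1 where
  ι : Type
  fin : Fintype ι
  T : SimpleGraph ι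
  tree : T.IsTree
  bag : ι → Finset ℕ
  bag_sub : ∀ t, bag t ⊆ V
  vertCover : ∀ v ∈ V, ∃ t, v ∈ bag t
  edgeCover : ∀ e ∈ E, ∃ t, e ⊆ bag t
  conn : ∀ v ∈ V, (T.induce {t | v ∈ bag t}).Connected

/-- The bagsize of a tree decomposition: the maximum bag size. -/
def TreeDecomp.bagsize {V : Finset ℕ} {E : Finset (Finset ℕ)} (D : TreeDecomp V E) : ℕ :=
  letI := D.fin
  Finset.univ.sup fun t => (D.bag t).card

/-- The treewidth of the hypergraph `(V, E)` (as an integer): the minimum bagsize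
over all tree decompositions, minus one. -/
noncomputable def treewidth (V : Finset ℕ) (E : Finset (Finset ℕ)) : ℤ :=
  sInf {n : ℤ | ∃ D : TreeDecomp V E, (D.bagsize : ℤ) = n} - 1

/-- Vertex set of the hypergraph of a holey formula with association `a`. -/
def holeyVerts (a : ℕ → Finset ℕ) (φ : Holey) : Finset ℕ :=
  (Holey.holes φ).toFinset.sup a

/-- Edge set of the hypergraph of a holey formula with association `a`:
an edge `a i` per hole `i`, plus the edge of the free variables. -/
def holeyEdges (a : ℕ → Finset ℕ) (φ : Holey) : Finset (Finset ℕ) :=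
  ((Holey.holes φ).toFinset.image a) ∪ {hfree a φ}

/-- The edges of the hypergraph of a pfo-formula: one edge per atom. -/
def atomEdges : PFO → Finset (Finset ℕ)
  | .atom _ vs => {vs.toFinset}
  | .conj f g => atomEdges f ∪ atomEdges g
  | .disj f g => atomEdges f ∪ atomEdges g
  | .ex _ f => atomEdges f
  | .all _ f => atomEdges f

/-- The vertices of the hypergraph of a pfo-formula: all variables of its atoms. -/
def atomVerts (φ : PFO) : Finset ℕ := (atomEdges φ).sup id

/-- The potential of a formula: the sum, over all subformula occurrences rooted at
a quantification, of the square of the number of atoms. -/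
def pot : PFO → ℕ
  | .atom _ _ => 0
  | .conj f g => pot f + pot g
  | .disj f g => pot f + pot g
  | .ex x f => atomCount (.ex x f) ^ 2 + pot f
  | .all x f => atomCount (.all x f) ^ 2 + pot f

/-- `⋈_x`: remove from a multiset of variable-sets all sets containing `x`, and add the
set obtained as the union of the removed sets with `x` deleted. -/
def joinVar (x : ℕ) (S : Multiset (Finset ℕ)) : Multiset (Finset ℕ) :=
  (S.filter (fun U => x ∉ U)) + {(S.filter (fun U => x ∈ U)).sup \ ({x} : Finset ℕ)}

/-- The multiset `mset_𝒯` of a holey formula under an association `a`. -/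
def msetT (a : ℕ → Finset ℕ) : Holey → Multiset (Finset ℕ)
  | .hole i => {a i}
  | .conj f g => msetT a f + msetT a g
  | .disj f g => msetT a f + msetT a g
  | .ex x f => joinVar x (msetT a f)
  | .all x f => joinVar x (msetT a f)

end WidthPaper

namespace WidthPaper
open PFO Holey

/-- Top is an atom or `∀`/`∨`. -/
def topAOA (φ : PFO) : Prop := PFO.isAtom φ ∨ PFO.topAO φ
/-- Top is an atom or `∃`/`∧`. -/
def topEAA (φ : PFO) : Prop := PFO.isAtom φ ∨ PFO.topEA φ

def GoodEA (h : Holey) (ψ : ℕ → PFO) : Prop :=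
  Holey.isEA h ∧ ∀ i ∈ Holey.holes h, topAOA (ψ i)
def GoodAO (h : Holey) (ψ : ℕ → PFO) : Prop :=
  Holey.isAO h ∧ ∀ i ∈ Holey.holes h, topEAA (ψ i)

lemma free_substH (ψ : ℕ → PFO) (h : Holey) :
    free (substH ψ h) = Holey.hfree (fun i => free (ψ i)) h := by
  induction h <;> simp [substH, free, Holey.hfree, *]

lemma step_free {f g : PFO} (hs : Step rTnoN f g) : free g = free f := by
  induction hs with
  | root hr =>
    have key : ∀ (x : ℕ) (f g : PFO), x ∉ free g →
        (free f \ {x}) ∪ free g = (free f ∪ free g) \ {x} := by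
      intro x f g hx
      ext v
      simp only [Finset.mem_union, Finset.mem_sdiff, Finset.mem_singleton]
      constructor
      · rintro (⟨hv, hne⟩ | hv)
        · exact ⟨Or.inl hv, hne⟩
        · exact ⟨Or.inr hv, fun e => hx (e ▸ hv)⟩
      · rintro ⟨hv | hv, hne⟩
        · exact Or.inl ⟨hv, hne⟩
        · exact Or.inr hv
    rcases hr with ((ha | hc | ho) | hpd | hpu)
    · cases ha <;> simp [free, Finset.union_assoc]
    · cases hc <;> simp [free, Finset.union_comm]
    · cases ho <;>
        · show (_ \ _) \ _ = (_ \ _) \ _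
          ext v; simp only [Finset.mem_sdiff, Finset.mem_singleton]; tauto
    · cases hpd with
      | ex x f g hx => exact key x f g hx
      | all x f g hx => exact key x f g hx
    · cases hpu with
      | ex x f g hx => exact (key x f g hx).symm
      | all x f g hx => exact (key x f g hx).symm
  | conjL _ ih => simp [free, ih]
  | conjR _ ih => simp [free, ih]
  | disjL _ ih => simp [free, ih]
  | disjR _ ih => simp [free, ih]
  | exC _ ih => simp [free, ih]
  | allC _ ih => simp [free, ih]

lemma step_topAOA {f g : PFO} (hs : Step rTnoN f g) (ht : topAOA f) : topAOA g := by
  cases hs with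
  | root hr =>
    rcases hr with ((ha | hc | ho) | hpd | hpu)
    · cases ha <;> simp_all [topAOA, PFO.isAtom, PFO.topAO]
    · cases hc <;> simp_all [topAOA, PFO.isAtom, PFO.topAO]
    · cases ho <;> simp_all [topAOA, PFO.isAtom, PFO.topAO]
    · cases hpd <;> simp_all [topAOA, PFO.isAtom, PFO.topAO]
    · cases hpu <;> simp_all [topAOA, PFO.isAtom, PFO.topAO]
  | conjL _ => simp_all [topAOA, PFO.isAtom, PFO.topAO]
  | conjR _ => simp_all [topAOA, PFO.isAtom, PFO.topAO]
  | disjL _ => simp_all [topAOA, PFO.isAtom, PFO.topAO]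
  | disjR _ => simp_all [topAOA, PFO.isAtom, PFO.topAO]
  | exC _ => simp_all [topAOA, PFO.isAtom, PFO.topAO]
  | allC _ => simp_all [topAOA, PFO.isAtom, PFO.topAO]

lemma step_topEAA {f g : PFO} (hs : Step rTnoN f g) (ht : topEAA f) : topEAA g := by
  cases hs with
  | root hr =>
    rcases hr with ((ha | hc | ho) | hpd | hpu)
    · cases ha <;> simp_all [topEAA, PFO.isAtom, PFO.topEA]
    · cases hc <;> simp_all [topEAA, PFO.isAtom, PFO.topEA]
    · cases ho <;> simp_all [topEAA, PFO.isAtom, PFO.topEA]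
    · cases hpd <;> simp_all [topEAA, PFO.isAtom, PFO.topEA]
    · cases hpu <;> simp_all [topEAA, PFO.isAtom, PFO.topEA]
  | conjL _ => simp_all [topEAA, PFO.isAtom, PFO.topEA]
  | conjR _ => simp_all [topEAA, PFO.isAtom, PFO.topEA]
  | disjL _ => simp_all [topEAA, PFO.isAtom, PFO.topEA]
  | disjR _ => simp_all [topEAA, PFO.isAtom, PFO.topEA]
  | exC _ => simp_all [topEAA, PFO.isAtom, PFO.topEA]
  | allC _ => simp_all [topEAA, PFO.isAtom, PFO.topEA]

lemma rtg_free {f g : PFO} (hs : Relation.ReflTransGen (Step rTnoN) f g) :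
    free g = free f := by
  induction hs with
  | refl => rfl
  | tail _ h ih => exact (step_free h).trans ih

lemma rtg_topAOA {f g : PFO} (hs : Relation.ReflTransGen (Step rTnoN) f g)
    (ht : topAOA f) : topAOA g := by
  induction hs with
  | refl => exact ht
  | tail _ h ih => exact step_topAOA h ih

lemma rtg_topEAA {f g : PFO} (hs : Relation.ReflTransGen (Step rTnoN) f g)
    (ht : topEAA f) : topEAA g := by
  induction hs with
  | refl => exact ht
  | tail _ h ih => exact step_topEAA h ih

lemma substH_congr {ψ ψ' : ℕ → PFO} {h : Holey}
    (he : ∀ i ∈ Holey.holes h, ψ i = ψ' i) : substH ψ h = substH ψ' h := by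
  induction h with
  | hole i => exact he i (by simp [Holey.holes])
  | conj h1 h2 ih1 ih2 =>
      simp only [substH]
      rw [ih1 fun i hi => he i (by simp [Holey.holes, hi]),
        ih2 fun i hi => he i (by simp [Holey.holes, hi])]
  | disj h1 h2 ih1 ih2 =>
      simp only [substH]
      rw [ih1 fun i hi => he i (by simp [Holey.holes, hi]),
        ih2 fun i hi => he i (by simp [Holey.holes, hi])]
  | ex x h1 ih1 => simp only [substH]; rw [ih1 fun i hi => he i (by simp [Holey.holes, hi])]
  | all x h1 ih1 => simp only [substH]; rw [ih1 fun i hi => he i (by simp [Holey.holes, hi])]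

lemma substH_eq_conj {ψ : ℕ → PFO} {h : Holey} {g1 g2 : PFO}
    (ht : ∀ i ∈ Holey.holes h, topAOA (ψ i))
    (he : substH ψ h = .conj g1 g2) :
    ∃ h1 h2, h = .conj h1 h2 ∧ g1 = substH ψ h1 ∧ g2 = substH ψ h2 := by
  cases h with
  | hole i =>
      simp only [substH] at he
      have := ht i (by simp [Holey.holes])
      rw [he] at this
      simp [topAOA, PFO.isAtom, PFO.topAO] at this
  | conj h1 h2 =>
      simp only [substH, PFO.conj.injEq] at he
      exact ⟨h1, h2, rfl, he.1.symm, he.2.symm⟩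
  | disj h1 h2 => simp [substH] at he
  | ex x h1 => simp [substH] at he
  | all x h1 => simp [substH] at he

lemma substH_eq_ex {ψ : ℕ → PFO} {h : Holey} {x : ℕ} {g : PFO}
    (ht : ∀ i ∈ Holey.holes h, topAOA (ψ i))
    (he : substH ψ h = .ex x g) :
    ∃ h1, h = .ex x h1 ∧ g = substH ψ h1 := by
  cases h with
  | hole i =>
      simp only [substH] at he
      have := ht i (by simp [Holey.holes])
      rw [he] at this
      simp [topAOA, PFO.isAtom, PFO.topAO] at this
  | conj h1 h2 => simp [substH] at he
  | disj h1 h2 => simp [substH] at he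
  | ex y h1 =>
      simp only [substH, PFO.ex.injEq] at he
      exact ⟨h1, by rw [he.1], he.2.symm⟩
  | all y h1 => simp [substH] at he

lemma substH_eq_disj {ψ : ℕ → PFO} {h : Holey} {g1 g2 : PFO}
    (ht : ∀ i ∈ Holey.holes h, topEAA (ψ i))
    (he : substH ψ h = .disj g1 g2) :
    ∃ h1 h2, h = .disj h1 h2 ∧ g1 = substH ψ h1 ∧ g2 = substH ψ h2 := by
  cases h with
  | hole i =>
      simp only [substH] at he
      have := ht i (by simp [Holey.holes])
      rw [he] at this
      simp [topEAA, PFO.isAtom, PFO.topEA] at this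
  | disj h1 h2 =>
      simp only [substH, PFO.disj.injEq] at he
      exact ⟨h1, h2, rfl, he.1.symm, he.2.symm⟩
  | conj h1 h2 => simp [substH] at he
  | ex x h1 => simp [substH] at he
  | all x h1 => simp [substH] at he

lemma substH_eq_all {ψ : ℕ → PFO} {h : Holey} {x : ℕ} {g : PFO}
    (ht : ∀ i ∈ Holey.holes h, topEAA (ψ i))
    (he : substH ψ h = .all x g) :
    ∃ h1, h = .all x h1 ∧ g = substH ψ h1 := by
  cases h with
  | hole i =>
      simp only [substH] at he
      have := ht i (by simp [Holey.holes])
      rw [he] at this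
      simp [topEAA, PFO.isAtom, PFO.topEA] at this
  | conj h1 h2 => simp [substH] at he
  | disj h1 h2 => simp [substH] at he
  | ex y h1 => simp [substH] at he
  | all y h1 =>
      simp only [substH, PFO.all.injEq] at he
      exact ⟨h1, by rw [he.1], he.2.symm⟩

end WidthPaper
namespace WidthPaper
open PFO Holey

abbrev HRel (ψ : ℕ → PFO) : Holey → Holey → Prop :=
  HStep (Holey.hrTnoN fun i => free (ψ i))

lemma one_step (ψ : ℕ → PFO) (h : Holey) :
    ∀ (Φ' : PFO), (Holey.holes h).Nodup →
    (GoodEA h ψ ∨ GoodAO h ψ) →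
    Step rTnoN (substH ψ h) Φ' →
    ∃ (h' : Holey) (ψ' : ℕ → PFO),
      Relation.ReflTransGen (HRel ψ) h h' ∧
      (∀ i, Relation.ReflTransGen (Step rTnoN) (ψ i) (ψ' i)) ∧
      (∀ i, i ∉ Holey.holes h → ψ' i = ψ i) ∧
      Φ' = substH ψ' h' ∧
      Holey.holes h' = Holey.holes h ∧
      (Holey.isEA h → Holey.isEA h') ∧
      (Holey.isAO h → Holey.isAO h') := by
  induction h with
  | hole i =>
      intro Φ' _ _ hs
      refine ⟨.hole i, Function.update ψ i Φ', .refl, ?_, ?_, ?_, rfl, ?_, ?_⟩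
      · intro j
        by_cases hj : j = i
        · subst hj; rw [Function.update_self]; exact .single hs
        · rw [Function.update_of_ne hj]
      · intro j hj
        rw [Function.update_of_ne (by simpa [Holey.holes] using hj)]
      · simp [substH]
      · exact id
      · exact id
  | conj h1 h2 ih1 ih2 =>
      intro Φ' hnd hg hs
      have hgE : GoodEA (.conj h1 h2) ψ := by
        rcases hg with hg | hg
        · exact hg
        · exact absurd hg.1 (by simp [Holey.isAO])
      have hEA1 : Holey.isEA h1 := hgE.1.1
      have hEA2 : Holey.isEA h2 := hgE.1.2
      have ht1 : ∀ i ∈ Holey.holes h1, topAOA (ψ i) := fun i hi =>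
        hgE.2 i (by simp [Holey.holes, hi])
      have ht2 : ∀ i ∈ Holey.holes h2, topAOA (ψ i) := fun i hi =>
        hgE.2 i (by simp [Holey.holes, hi])
      have hndA := Multiset.nodup_add.mp (by simpa [Holey.holes] using hnd)
      simp only [substH] at hs
      generalize hA : substH ψ h1 = A at hs
      generalize hB : substH ψ h2 = B at hs
      have hsub : substH ψ (.conj h1 h2) = PFO.conj A B := by simp [substH, hA, hB]
      cases hs with
      | conjL hstep =>
          subst hA hB
          obtain ⟨h1', ψ', hH, hΨ, hout, hΦ, hho, hE, hO⟩ :=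
            ih1 _ hndA.1 (Or.inl ⟨hEA1, ht1⟩) hstep
          refine ⟨.conj h1' h2, ψ', ?_, hΨ, ?_, ?_, ?_, ?_, ?_⟩
          · exact hH.lift (fun t => Holey.conj t h2) fun a b hab => HStep.conjL hab
          · intro j hj
            exact hout j fun hj1 => hj (by simp [Holey.holes, hj1])
          · have : substH ψ' h2 = substH ψ h2 :=
              (substH_congr fun i hi =>
                (hout i (Multiset.disjoint_right.mp hndA.2.2 hi)).symm).symm
            simp [substH, hΦ, this]
          · simp [Holey.holes, hho]
          · exact fun _ => ⟨hE hEA1, hEA2⟩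
          · simp [Holey.isAO]
      | conjR hstep =>
          subst hA hB
          obtain ⟨h2', ψ', hH, hΨ, hout, hΦ, hho, hE, hO⟩ :=
            ih2 _ hndA.2.1 (Or.inl ⟨hEA2, ht2⟩) hstep
          refine ⟨.conj h1 h2', ψ', ?_, hΨ, ?_, ?_, ?_, ?_, ?_⟩
          · exact hH.lift (fun t => Holey.conj h1 t) fun a b hab => HStep.conjR hab
          · intro j hj
            exact hout j fun hj1 => hj (by simp [Holey.holes, hj1])
          · have : substH ψ' h1 = substH ψ h1 :=
              (substH_congr fun i hi =>
                (hout i (Multiset.disjoint_left.mp hndA.2.2 hi)).symm).symm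
            simp [substH, hΦ, this]
          · simp [Holey.holes, hho]
          · exact fun _ => ⟨hEA1, hE hEA2⟩
          · simp [Holey.isAO]
      | root hr =>
          rcases hr with ((ha | hc | ho) | hpd | hpu)
          · cases ha with
            | conj1 f g k =>
                obtain ⟨h21, h22, rfl, rfl, rfl⟩ := substH_eq_conj ht2 hB
                refine ⟨.conj (.conj h1 h21) h22, ψ,
                  .single (HStep.root (Or.inl (HRA.conj1 _ _ _))),
                  fun i => .refl, fun i _ => rfl, by simp [substH, hA], ?_, ?_, ?_⟩
                · simp [Holey.holes, add_assoc]
                · simp only [Holey.isEA] at hEA2 ⊢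
                  exact fun _ => ⟨⟨hEA1, hEA2.1⟩, hEA2.2⟩
                · simp [Holey.isAO]
            | conj2 f g k =>
                obtain ⟨h11, h12, rfl, rfl, rfl⟩ := substH_eq_conj ht1 hA
                refine ⟨.conj h11 (.conj h12 h2), ψ,
                  .single (HStep.root (Or.inl (HRA.conj2 _ _ _))),
                  fun i => .refl, fun i _ => rfl, by simp [substH, hB], ?_, ?_, ?_⟩
                · simp [Holey.holes, add_assoc]
                · simp only [Holey.isEA] at hEA1 ⊢
                  exact fun _ => ⟨hEA1.1, hEA1.2, hEA2⟩
                · simp [Holey.isAO]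
          · cases hc with
            | conj f g =>
                refine ⟨.conj h2 h1, ψ,
                  .single (HStep.root (Or.inr (Or.inl (HRC.conj _ _)))),
                  fun i => .refl, fun i _ => rfl, by simp [substH, hA, hB], ?_, ?_, ?_⟩
                · simp [Holey.holes, add_comm]
                · exact fun _ => ⟨hEA2, hEA1⟩
                · simp [Holey.isAO]
          · cases ho
          · cases hpd
          · cases hpu with
            | ex x f g hx =>
                obtain ⟨h11, rfl, rfl⟩ := substH_eq_ex ht1 hA
                rw [← hB, free_substH] at hx
                refine ⟨.ex x (.conj h11 h2), ψ,
                  .single (HStep.root (Or.inr (Or.inr (Or.inr (Or.inr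
                    (HRPd.ex x h11 h2 hx)))))),
                  fun i => .refl, fun i _ => rfl, by simp [substH, hB], ?_, ?_, ?_⟩
                · simp [Holey.holes]
                · simp only [Holey.isEA] at hEA1 ⊢
                  exact fun _ => ⟨hEA1, hEA2⟩
                · simp [Holey.isAO]
  | disj h1 h2 ih1 ih2 =>
      intro Φ' hnd hg hs
      have hgE : GoodAO (.disj h1 h2) ψ := by
        rcases hg with hg | hg
        · exact absurd hg.1 (by simp [Holey.isEA])
        · exact hg
      have hEA1 : Holey.isAO h1 := hgE.1.1
      have hEA2 : Holey.isAO h2 := hgE.1.2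
      have ht1 : ∀ i ∈ Holey.holes h1, topEAA (ψ i) := fun i hi =>
        hgE.2 i (by simp [Holey.holes, hi])
      have ht2 : ∀ i ∈ Holey.holes h2, topEAA (ψ i) := fun i hi =>
        hgE.2 i (by simp [Holey.holes, hi])
      have hndA := Multiset.nodup_add.mp (by simpa [Holey.holes] using hnd)
      simp only [substH] at hs
      generalize hA : substH ψ h1 = A at hs
      generalize hB : substH ψ h2 = B at hs
      cases hs with
      | disjL hstep =>
          subst hA hB
          obtain ⟨h1', ψ', hH, hΨ, hout, hΦ, hho, hE, hO⟩ :=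
            ih1 _ hndA.1 (Or.inr ⟨hEA1, ht1⟩) hstep
          refine ⟨.disj h1' h2, ψ', ?_, hΨ, ?_, ?_, ?_, ?_, ?_⟩
          · exact hH.lift (fun t => Holey.disj t h2) fun a b hab => HStep.disjL hab
          · intro j hj
            exact hout j fun hj1 => hj (by simp [Holey.holes, hj1])
          · have : substH ψ' h2 = substH ψ h2 :=
              (substH_congr fun i hi =>
                (hout i (Multiset.disjoint_right.mp hndA.2.2 hi)).symm).symm
            simp [substH, hΦ, this]
          · simp [Holey.holes, hho]
          · simp [Holey.isEA]
          · exact fun _ => ⟨hO hEA1, hEA2⟩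
      | disjR hstep =>
          subst hA hB
          obtain ⟨h2', ψ', hH, hΨ, hout, hΦ, hho, hE, hO⟩ :=
            ih2 _ hndA.2.1 (Or.inr ⟨hEA2, ht2⟩) hstep
          refine ⟨.disj h1 h2', ψ', ?_, hΨ, ?_, ?_, ?_, ?_, ?_⟩
          · exact hH.lift (fun t => Holey.disj h1 t) fun a b hab => HStep.disjR hab
          · intro j hj
            exact hout j fun hj1 => hj (by simp [Holey.holes, hj1])
          · have : substH ψ' h1 = substH ψ h1 :=
              (substH_congr fun i hi =>
                (hout i (Multiset.disjoint_left.mp hndA.2.2 hi)).symm).symm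
            simp [substH, hΦ, this]
          · simp [Holey.holes, hho]
          · simp [Holey.isEA]
          · exact fun _ => ⟨hEA1, hO hEA2⟩
      | root hr =>
          rcases hr with ((ha | hc | ho) | hpd | hpu)
          · cases ha with
            | disj1 f g k =>
                obtain ⟨h21, h22, rfl, rfl, rfl⟩ := substH_eq_disj ht2 hB
                refine ⟨.disj (.disj h1 h21) h22, ψ,
                  .single (HStep.root (Or.inl (HRA.disj1 _ _ _))),
                  fun i => .refl, fun i _ => rfl, by simp [substH, hA], ?_, ?_, ?_⟩
                · simp [Holey.holes, add_assoc]
                · simp [Holey.isEA]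
                · simp only [Holey.isAO] at hEA2 ⊢
                  exact fun _ => ⟨⟨hEA1, hEA2.1⟩, hEA2.2⟩
            | disj2 f g k =>
                obtain ⟨h11, h12, rfl, rfl, rfl⟩ := substH_eq_disj ht1 hA
                refine ⟨.disj h11 (.disj h12 h2), ψ,
                  .single (HStep.root (Or.inl (HRA.disj2 _ _ _))),
                  fun i => .refl, fun i _ => rfl, by simp [substH, hB], ?_, ?_, ?_⟩
                · simp [Holey.holes, add_assoc]
                · simp [Holey.isEA]
                · simp only [Holey.isAO] at hEA1 ⊢
                  exact fun _ => ⟨hEA1.1, hEA1.2, hEA2⟩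
          · cases hc with
            | disj f g =>
                refine ⟨.disj h2 h1, ψ,
                  .single (HStep.root (Or.inr (Or.inl (HRC.disj _ _)))),
                  fun i => .refl, fun i _ => rfl, by simp [substH, hA, hB], ?_, ?_, ?_⟩
                · simp [Holey.holes, add_comm]
                · simp [Holey.isEA]
                · exact fun _ => ⟨hEA2, hEA1⟩
          · cases ho
          · cases hpd
          · cases hpu with
            | all x f g hx =>
                obtain ⟨h11, rfl, rfl⟩ := substH_eq_all ht1 hA
                rw [← hB, free_substH] at hx
                refine ⟨.all x (.disj h11 h2), ψ,
                  .single (HStep.root (Or.inr (Or.inr (Or.inr (Or.inr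
                    (HRPd.all x h11 h2 hx)))))),
                  fun i => .refl, fun i _ => rfl, by simp [substH, hB], ?_, ?_, ?_⟩
                · simp [Holey.holes]
                · simp [Holey.isEA]
                · simp only [Holey.isAO] at hEA1 ⊢
                  exact fun _ => ⟨hEA1, hEA2⟩
  | ex x h1 ih1 =>
      intro Φ' hnd hg hs
      have hgE : GoodEA (.ex x h1) ψ := by
        rcases hg with hg | hg
        · exact hg
        · exact absurd hg.1 (by simp [Holey.isAO])
      have hEA1 : Holey.isEA h1 := hgE.1
      have ht1 : ∀ i ∈ Holey.holes h1, topAOA (ψ i) := fun i hi =>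
        hgE.2 i (by simpa [Holey.holes] using hi)
      have hnd1 : (Holey.holes h1).Nodup := by simpa [Holey.holes] using hnd
      simp only [substH] at hs
      generalize hA : substH ψ h1 = A at hs
      cases hs with
      | exC hstep =>
          subst hA
          obtain ⟨h1', ψ', hH, hΨ, hout, hΦ, hho, hE, hO⟩ :=
            ih1 _ hnd1 (Or.inl ⟨hEA1, ht1⟩) hstep
          refine ⟨.ex x h1', ψ', ?_, hΨ, ?_, by simp [substH, hΦ], ?_, ?_, ?_⟩
          · exact hH.lift (fun t => Holey.ex x t) fun a b hab => HStep.exC hab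
          · intro j hj
            exact hout j (by simpa [Holey.holes] using hj)
          · simpa [Holey.holes] using hho
          · exact fun _ => hE hEA1
          · simp [Holey.isAO]
      | root hr =>
          rcases hr with ((ha | hc | ho) | hpd | hpu)
          · cases ha
          · cases hc
          · cases ho with
            | ex y z f =>
                obtain ⟨h11, rfl, rfl⟩ := substH_eq_ex ht1 hA
                refine ⟨.ex z (.ex x h11), ψ,
                  .single (HStep.root (Or.inr (Or.inr (Or.inl (HRO.ex x z h11))))),
                  fun i => .refl, fun i _ => rfl, by simp [substH], ?_, ?_, ?_⟩
                · simp [Holey.holes]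
                · simpa [Holey.isEA] using id
                · simp [Holey.isAO]
          · cases hpd with
            | ex y f g hx =>
                obtain ⟨h11, h12, rfl, rfl, rfl⟩ := substH_eq_conj ht1 hA
                rw [free_substH] at hx
                refine ⟨.conj (.ex x h11) h12, ψ,
                  .single (HStep.root (Or.inr (Or.inr (Or.inr (Or.inl
                    (HRPd.ex x h11 h12 hx)))))),
                  fun i => .refl, fun i _ => rfl, by simp [substH], ?_, ?_, ?_⟩
                · simp [Holey.holes]
                · simp only [Holey.isEA] at hEA1 ⊢
                  exact fun _ => ⟨hEA1.1, hEA1.2⟩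
                · simp [Holey.isAO]
          · cases hpu
  | all x h1 ih1 =>
      intro Φ' hnd hg hs
      have hgE : GoodAO (.all x h1) ψ := by
        rcases hg with hg | hg
        · exact absurd hg.1 (by simp [Holey.isEA])
        · exact hg
      have hEA1 : Holey.isAO h1 := hgE.1
      have ht1 : ∀ i ∈ Holey.holes h1, topEAA (ψ i) := fun i hi =>
        hgE.2 i (by simpa [Holey.holes] using hi)
      have hnd1 : (Holey.holes h1).Nodup := by simpa [Holey.holes] using hnd
      simp only [substH] at hs
      generalize hA : substH ψ h1 = A at hs
      cases hs with
      | allC hstep =>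
          subst hA
          obtain ⟨h1', ψ', hH, hΨ, hout, hΦ, hho, hE, hO⟩ :=
            ih1 _ hnd1 (Or.inr ⟨hEA1, ht1⟩) hstep
          refine ⟨.all x h1', ψ', ?_, hΨ, ?_, by simp [substH, hΦ], ?_, ?_, ?_⟩
          · exact hH.lift (fun t => Holey.all x t) fun a b hab => HStep.allC hab
          · intro j hj
            exact hout j (by simpa [Holey.holes] using hj)
          · simpa [Holey.holes] using hho
          · simp [Holey.isEA]
          · exact fun _ => hO hEA1
      | root hr =>
          rcases hr with ((ha | hc | ho) | hpd | hpu)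
          · cases ha
          · cases hc
          · cases ho with
            | all y z f =>
                obtain ⟨h11, rfl, rfl⟩ := substH_eq_all ht1 hA
                refine ⟨.all z (.all x h11), ψ,
                  .single (HStep.root (Or.inr (Or.inr (Or.inl (HRO.all x z h11))))),
                  fun i => .refl, fun i _ => rfl, by simp [substH], ?_, ?_, ?_⟩
                · simp [Holey.holes]
                · simp [Holey.isEA]
                · simpa [Holey.isAO] using id
          · cases hpd with
            | all y f g hx =>
                obtain ⟨h11, h12, rfl, rfl, rfl⟩ := substH_eq_disj ht1 hA
                rw [free_substH] at hx
                refine ⟨.disj (.all x h11) h12, ψ,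
                  .single (HStep.root (Or.inr (Or.inr (Or.inr (Or.inl
                    (HRPd.all x h11 h12 hx)))))),
                  fun i => .refl, fun i _ => rfl, by simp [substH], ?_, ?_, ?_⟩
                · simp [Holey.holes]
                · simp [Holey.isEA]
                · simp only [Holey.isAO] at hEA1 ⊢
                  exact fun _ => ⟨hEA1.1, hEA1.2⟩
          · cases hpu
end WidthPaper
namespace WidthPaper
open PFO Holey

lemma step_symm : ∀ {f g : PFO}, Step rTnoN f g → Step rTnoN g f := by
  intro f g hs
  induction hs with
  | root hr =>
      refine Step.root ?_
      rcases hr with ((ha | hc | ho) | hpd | hpu)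
      · refine Or.inl (Or.inl ?_); cases ha with
        | conj1 f g h => exact RA.conj2 f g h
        | conj2 f g h => exact RA.conj1 f g h
        | disj1 f g h => exact RA.disj2 f g h
        | disj2 f g h => exact RA.disj1 f g h
      · refine Or.inl (Or.inr (Or.inl ?_)); cases hc with
        | conj f g => exact RC.conj g f
        | disj f g => exact RC.disj g f
      · refine Or.inl (Or.inr (Or.inr ?_)); cases ho with
        | ex x y f => exact RO.ex y x f
        | all x y f => exact RO.all y x f
      · exact Or.inr (Or.inr hpd)
      · exact Or.inr (Or.inl hpu)
  | conjL _ ih => exact Step.conjL ih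
  | conjR _ ih => exact Step.conjR ih
  | disjL _ ih => exact Step.disjL ih
  | disjR _ ih => exact Step.disjR ih
  | exC _ ih => exact Step.exC ih
  | allC _ ih => exact Step.allC ih

lemma eqv_to_rtg {f g : PFO} (he : Relation.EqvGen (Step rTnoN) f g) :
    Relation.ReflTransGen (Step rTnoN) f g := by
  induction he with
  | rel _ _ h => exact .single h
  | refl _ => exact .refl
  | symm _ _ _ ih => exact (@Relation.ReflTransGen.symmetric _ (Step rTnoN) ⟨fun _ _ => step_symm⟩).symm _ _ ih
  | trans _ _ _ _ _ ih1 ih2 => exact ih1.trans ih2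

lemma rtg_to_eqv {α : Type*} {r : α → α → Prop} {f g : α}
    (he : Relation.ReflTransGen r f g) : Relation.EqvGen r f g := by
  induction he with
  | refl => exact Relation.EqvGen.refl _
  | tail _ h ih => exact ih.trans _ _ _ (Relation.EqvGen.rel _ _ h)

lemma chain_decomp : ∀ {Φ Φ' : PFO}, Relation.ReflTransGen (Step rTnoN) Φ Φ' →
    ∀ (h : Holey) (ψ : ℕ → PFO), Φ = substH ψ h → (Holey.holes h).Nodup →
    (GoodEA h ψ ∨ GoodAO h ψ) →
    ∃ (h' : Holey) (ψ' : ℕ → PFO),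
      Relation.ReflTransGen (HRel ψ) h h' ∧
      (∀ i, Relation.ReflTransGen (Step rTnoN) (ψ i) (ψ' i)) ∧
      Φ' = substH ψ' h' := by
  intro Φ Φ' hrt
  induction hrt using Relation.ReflTransGen.head_induction_on with
  | refl =>
      intro h ψ hΦ _ _
      exact ⟨h, ψ, .refl, fun _ => .refl, hΦ⟩
  | head hstep _ ih =>
      intro h ψ hΦ hnd hg
      subst hΦ
      obtain ⟨h₁, ψ₁, hH₁, hΨ₁, _, hc, hho, hE, hO⟩ :=
        one_step ψ h _ hnd hg hstep
      have hfree1 : (fun i => free (ψ₁ i)) = fun i => free (ψ i) :=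
        funext fun i => rtg_free (hΨ₁ i)
      have hnd1 : (Holey.holes h₁).Nodup := hho ▸ hnd
      have hg1 : GoodEA h₁ ψ₁ ∨ GoodAO h₁ ψ₁ := by
        rcases hg with ⟨hEA, ht⟩ | ⟨hAO, ht⟩
        · exact Or.inl ⟨hE hEA, fun i hi => rtg_topAOA (hΨ₁ i) (ht i (hho ▸ hi))⟩
        · exact Or.inr ⟨hO hAO, fun i hi => rtg_topEAA (hΨ₁ i) (ht i (hho ▸ hi))⟩
      obtain ⟨h', ψ', hH₂, hΨ₂, hΦ'⟩ := ih h₁ ψ₁ hc hnd1 hg1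
      rw [show HRel ψ₁ = HRel ψ from by unfold HRel; rw [hfree1]] at hH₂
      exact ⟨h', ψ', hH₁.trans hH₂, fun i => (hΨ₁ i).trans (hΨ₂ i), hΦ'⟩

lemma org_topAO {Φ : PFO} (ho : OrganizedAO Φ) : PFO.topAO Φ := by
  cases ho with
  | mk hh ψ hAO hnh _ _ =>
      cases hh with
      | hole i => exact absurd trivial hnh
      | conj h1 h2 => exact absurd hAO (by simp [Holey.isAO])
      | disj h1 h2 => trivial
      | ex x h1 => exact absurd hAO (by simp [Holey.isAO])
      | all x h1 => trivial

lemma org_topEA {Φ : PFO} (ho : OrganizedEA Φ) : PFO.topEA Φ := by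
  cases ho with
  | mk hh ψ hEA hnh _ _ =>
      cases hh with
      | hole i => exact absurd trivial hnh
      | conj h1 h2 => trivial
      | disj h1 h2 => exact absurd hEA (by simp [Holey.isEA])
      | ex x h1 => trivial
      | all x h1 => exact absurd hEA (by simp [Holey.isEA])

end WidthPaper
open WidthPaper WidthPaper.PFO WidthPaper.Holey in
/-- for an organized formula `Φ = h⟦ψ₁,…,ψ_k⟧`, every formula in
`[Φ]_{𝒯∖{N}}` has the form `h'⟦ψ'₁,…,ψ'_k⟧` with `h' ∈ [h]_{𝒯∖{N}}` (rules applied to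
the holey formula under the association `i ↦ free (ψ i)`) and `ψ'_i ∈ [ψ_i]_{𝒯∖{N}}`. -/
theorem regions_rewrite_independently (h : Holey) (ψ : ℕ → PFO)
    (hna : ¬ Holey.isHole h) (hnd : (Holey.holes h).Nodup)
    (horg : (Holey.isEA h ∧ ∀ i ∈ Holey.holes h, ¬ PFO.isAtom (ψ i) → OrganizedAO (ψ i)) ∨
            (Holey.isAO h ∧ ∀ i ∈ Holey.holes h, ¬ PFO.isAtom (ψ i) → OrganizedEA (ψ i)))
    (Φ' : PFO)
    (hΦ' : Relation.EqvGen (Step rTnoN) (substH ψ h) Φ') :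
    ∃ (h' : Holey) (ψ' : ℕ → PFO),
      Relation.EqvGen (HStep (hrTnoN fun i => free (ψ i))) h h' ∧
      (∀ i, Relation.EqvGen (Step rTnoN) (ψ i) (ψ' i)) ∧
      Φ' = substH ψ' h' := by
  have hg : WidthPaper.GoodEA h ψ ∨ WidthPaper.GoodAO h ψ := by
    rcases horg with ⟨hEA, ht⟩ | ⟨hAO, ht⟩
    · refine Or.inl ⟨hEA, fun i hi => ?_⟩
      by_cases hat : PFO.isAtom (ψ i)
      · exact Or.inl hat
      · exact Or.inr (WidthPaper.org_topAO (ht i hi hat))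
    · refine Or.inr ⟨hAO, fun i hi => ?_⟩
      by_cases hat : PFO.isAtom (ψ i)
      · exact Or.inl hat
      · exact Or.inr (WidthPaper.org_topEA (ht i hi hat))
  obtain ⟨h', ψ', hH, hΨ, hΦ⟩ :=
    WidthPaper.chain_decomp (WidthPaper.eqv_to_rtg hΦ') h ψ rfl hnd hg
  exact ⟨h', ψ', WidthPaper.rtg_to_eqv hH, fun i => WidthPaper.rtg_to_eqv (hΨ i), hΦ⟩
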